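/- Let a ≥ 2 be a real number, and let x ≥ 0 and ε > 0 satisfy x + ε ≤ 1. Then ε³a/((1 + εa)²(1 − x)²) ≤ ζ_a(x + ε) − ζ_a(x) ≤ ε(1 + εa)²/(a(1 − x)²), where ζ_a(t) = t/(a − (a−1)t). (Note that x < 1, so 1 − x > 0.) -/

import Mathlib

/-- Increment bound for `ζ_a` (Proposition 2.4, second estimate): for `a ≥ 2`, `x ≥ 0`,
`ε > 0` with `x + ε ≤ 1`, one has
`ε³a/((1+εa)²(1-x)²) ≤ ζ_a(x+ε) - ζ_a(x) ≤ ε(1+εa)²/(a(1-x)²)`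
where `ζ_a(t) = t/(a-(a-1)t)`. -/
theorem yoccoz_zeta_increment_bound (a x ε : ℝ) (ha : 2 ≤ a) (hx : 0 ≤ x) (hε : 0 < ε)
    (hxε : x + ε ≤ 1) :
    ε ^ 3 * a / ((1 + ε * a) ^ 2 * (1 - x) ^ 2)
      ≤ (x + ε) / (a - (a - 1) * (x + ε)) - x / (a - (a - 1) * x) ∧
    (x + ε) / (a - (a - 1) * (x + ε)) - x / (a - (a - 1) * x)
      ≤ ε * (1 + ε * a) ^ 2 / (a * (1 - x) ^ 2) := by
  have hu : ε ≤ 1 - x := by linarith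
  have hu0 : 0 < 1 - x := by linarith
  have ha0 : 0 < a := by linarith
  have hD1 : 0 < a - (a - 1) * (x + ε) := by nlinarith
  have hD2 : 0 < a - (a - 1) * x := by nlinarith
  have hεa : 0 < 1 + ε * a := by nlinarith
  have hdiff : (x + ε) / (a - (a - 1) * (x + ε)) - x / (a - (a - 1) * x)
      = ε * a / ((a - (a - 1) * (x + ε)) * (a - (a - 1) * x)) := by
    rw [div_sub_div _ _ hD1.ne' hD2.ne']
    congr 1
    ring
  rw [hdiff]
  have ha1 : (0:ℝ) ≤ a - 1 := by linarith
  -- key intermediate inequalities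
  have h1 : a * (1 - x) ≤ (1 + ε * a) * (a - (a - 1) * (x + ε)) := by
    nlinarith [mul_nonneg (mul_nonneg hε.le ha0.le)
      (mul_nonneg ha1 (by linarith : (0:ℝ) ≤ 1 - x - ε))]
  have h2 : a * (1 - x) ≤ (1 + ε * a) * (a - (a - 1) * x) := by
    nlinarith [mul_nonneg (mul_nonneg hε.le ha0.le) hD2.le]
  have h3 : ε * (a - (a - 1) * x) ≤ (1 + ε * a) * (1 - x) := by
    nlinarith [mul_nonneg hε.le hu0.le]
  have h4 : ε * (a - (a - 1) * (x + ε)) ≤ (1 + ε * a) * (1 - x) := by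
    nlinarith [mul_nonneg hε.le hu0.le, mul_nonneg (mul_nonneg hε.le ha1) hε.le]
  have hP1 : 0 ≤ ε * (a - (a - 1) * (x + ε)) := by positivity
  have hP2 : 0 ≤ a * (1 - x) := by positivity
  have h34 := mul_le_mul h3 h4 hP1 (by positivity)
  have h12 := mul_le_mul h1 h2 hP2 (by positivity)
  constructor
  · rw [div_le_div_iff₀ (by positivity) (by positivity)]
    have h5 := mul_le_mul_of_nonneg_left h34 (mul_nonneg hε.le ha0.le)
    have e1 : ε ^ 3 * a * ((a - (a - 1) * (x + ε)) * (a - (a - 1) * x))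
        = ε * a * (ε * (a - (a - 1) * x) * (ε * (a - (a - 1) * (x + ε)))) := by ring
    have e2 : ε * a * ((1 + ε * a) * (1 - x) * ((1 + ε * a) * (1 - x)))
        = ε * a * ((1 + ε * a) ^ 2 * (1 - x) ^ 2) := by ring
    linarith
  · rw [div_le_div_iff₀ (by positivity) (by positivity)]
    have h5 := mul_le_mul_of_nonneg_left h12 hε.le
    have e1 : ε * a * (a * (1 - x) ^ 2) = ε * (a * (1 - x) * (a * (1 - x))) := by ring
    have e2 : ε * ((1 + ε * a) * (a - (a - 1) * (x + ε)) * ((1 + ε * a) * (a - (a - 1) * x)))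
        = ε * (1 + ε * a) ^ 2 * ((a - (a - 1) * (x + ε)) * (a - (a - 1) * x)) := by ring
    linarith
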